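/- Let 𝒜 be a finite nonempty set, θ, θ' : 𝒜 → ℝ with |θ'(a) − θ(a)| ≤ 1/3 for every a ∈ 𝒜, and fix a1 ∈ 𝒜. Set M := max_{a∈𝒜} θ(a), M' := max_{a∈𝒜} θ'(a), and Δ := (θ'(a1) − θ(a1)) + (M − M'). If θ'(a1) ≥ θ(a1) and M' ≤ M, then π̂_θ(a1)·Δ ≤ π̂_{θ'}(a1) − π̂_θ(a1) ≤ 1.5·π̂_θ(a1)·Δ. -/
import Mathlib


open Finset

lemma exp_le_one_add_3div2 {x : ℝ} (hx0 : 0 ≤ x) (hx : x ≤ 2 / 3) :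
    Real.exp x ≤ 1 + 1.5 * x := by
  have hkey := convexOn_exp.2 (Set.mem_univ (0 : ℝ)) (Set.mem_univ (2 / 3 : ℝ))
    (show (0:ℝ) ≤ 1 - 1.5 * x by nlinarith)
    (show (0:ℝ) ≤ 1.5 * x by nlinarith) (by ring)
  simp only [smul_eq_mul, mul_zero, zero_add, Real.exp_zero, mul_one] at hkey
  have h23 : Real.exp (2 / 3) ≤ 2 := by
    have := Real.log_two_gt_d9
    calc Real.exp (2 / 3) ≤ Real.exp (Real.log 2) :=
          Real.exp_le_exp.2 (by linarith)
      _ = 2 := Real.exp_log (by norm_num)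
  have hx' : (1.5 * x) * (2 / 3) = x := by ring
  rw [hx'] at hkey
  nlinarith [hkey, mul_le_mul_of_nonneg_left h23 (by nlinarith : (0:ℝ) ≤ 1.5 * x)]

/-- Rescaled policy: `π̂_θ(a) = exp(θ a − max_{a'} θ a')`. -/
noncomputable def rescaledPolicy {𝒜 : Type*} [Fintype 𝒜] [Nonempty 𝒜]
    (θ : 𝒜 → ℝ) (a : 𝒜) : ℝ :=
  Real.exp (θ a - Finset.univ.sup' Finset.univ_nonempty θ)

/-- **One-step change of the rescaled policy (increasing case):** if the
logits move by at most `1/3` per action, `θ' a₁ ≥ θ a₁` and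
`max θ' ≤ max θ`, then with `Δ := (θ' a₁ − θ a₁) + (max θ − max θ')` one has
`π̂_θ(a₁) · Δ ≤ π̂_{θ'}(a₁) − π̂_θ(a₁) ≤ 1.5 · π̂_θ(a₁) · Δ`. -/
theorem rescaledPolicy_step_increasing
    {𝒜 : Type*} [Fintype 𝒜] [Nonempty 𝒜] (θ θ' : 𝒜 → ℝ)
    (hclose : ∀ a : 𝒜, |θ' a - θ a| ≤ 1 / 3) (a₁ : 𝒜)
    (ha₁ : θ a₁ ≤ θ' a₁)
    (hM : Finset.univ.sup' Finset.univ_nonempty θ' ≤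
      Finset.univ.sup' Finset.univ_nonempty θ) :
    rescaledPolicy θ a₁ *
        ((θ' a₁ - θ a₁) + (Finset.univ.sup' Finset.univ_nonempty θ -
          Finset.univ.sup' Finset.univ_nonempty θ')) ≤
      rescaledPolicy θ' a₁ - rescaledPolicy θ a₁ ∧
    rescaledPolicy θ' a₁ - rescaledPolicy θ a₁ ≤
      1.5 * (rescaledPolicy θ a₁ *
        ((θ' a₁ - θ a₁) + (Finset.univ.sup' Finset.univ_nonempty θ -
          Finset.univ.sup' Finset.univ_nonempty θ'))) := by
  set M := Finset.univ.sup' Finset.univ_nonempty θ with hMdef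
  set M' := Finset.univ.sup' Finset.univ_nonempty θ' with hM'def
  set Δ : ℝ := (θ' a₁ - θ a₁) + (M - M') with hΔdef
  have hΔ0 : 0 ≤ Δ := by unfold Δ; linarith
  have hMM' : M ≤ M' + 1 / 3 := by
    apply Finset.sup'_le
    intro a _
    have h1 := (abs_le.1 (hclose a)).1
    have h2 : θ' a ≤ M' := Finset.le_sup' θ' (Finset.mem_univ a)
    linarith
  have hΔ23 : Δ ≤ 2 / 3 := by
    have := (abs_le.1 (hclose a₁)).2
    unfold Δ; linarith
  have hrw : rescaledPolicy θ' a₁ = rescaledPolicy θ a₁ * Real.exp Δ := by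
    unfold rescaledPolicy
    rw [← Real.exp_add]
    congr 1
    unfold Δ
    ring
  have hpos : 0 < rescaledPolicy θ a₁ := Real.exp_pos _
  constructor
  · have h := Real.add_one_le_exp Δ
    rw [hrw]
    nlinarith
  · have h := exp_le_one_add_3div2 hΔ0 hΔ23
    rw [hrw]
    nlinarith
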